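/- Fix q ≥ 2 and let φ_cw : ℂ^{q+1} × ℂ^{q+1} → ℂ^{q+1} be the easy Coppersmith–Winograd bilinear map. Then for every n ≥ 1, bR(φ_cw^{⊗n}) ≥ (q + 1)ⁿ + 2ⁿ − 1, where φ_cw^{⊗n} denotes the n-fold tensor product of φ_cw with itself. -/

import Mathlib

open scoped BigOperators

/-- A tensor (structure-constant array of a bilinear map) is a sum of `r`
decomposable tensors, i.e. has rank at most `r`. -/
def rankLE {I J K : Type*} (T : I → J → K → ℂ) (r : ℕ) : Prop :=
  ∃ u : Fin r → I → ℂ, ∃ v : Fin r → J → ℂ, ∃ w : Fin r → K → ℂ,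
    T = fun i j k => ∑ s, u s i * v s j * w s k

/-- The border rank: the least `r` such that `T` is a limit of tensors of rank
at most `r`. -/
noncomputable def bRank {I J K : Type*} (T : I → J → K → ℂ) : ℕ :=
  sInf {r | T ∈ closure {S | rankLE S r}}

/-- The easy Coppersmith–Winograd bilinear map
`φ_cw(a, b) = (Σᵢ aᵢbᵢ) e₀ + Σᵢ (a₀bᵢ + aᵢb₀) eᵢ` on `ℂ^{q+1}`,
as a structure-constant array. -/
noncomputable def cwArr (q : ℕ) : Fin (q + 1) → Fin (q + 1) → Fin (q + 1) → ℂ :=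
  fun i j k =>
    if k = 0 then (if i = j ∧ i ≠ 0 then 1 else 0)
    else (if i = 0 ∧ j = k then 1 else 0) + (if i = k ∧ j = 0 then 1 else 0)

/-- The `n`-fold tensor power `φ_cw^{⊗n}`, in coordinates. -/
noncomputable def cwPow (q n : ℕ) :
    (Fin n → Fin (q + 1)) → (Fin n → Fin (q + 1)) → (Fin n → Fin (q + 1)) → ℂ :=
  fun i j k => ∏ t, cwArr q (i t) (j t) (k t)


/-- rank bound from a decomposition indexed by an arbitrary fintype. -/
lemma rankLE_of_fintype {I J K σ : Type*} [Fintype σ] {T : I → J → K → ℂ} {r : ℕ}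
    (u : σ → I → ℂ) (v : σ → J → ℂ) (w : σ → K → ℂ)
    (hcard : Fintype.card σ ≤ r)
    (hT : T = fun i j k => ∑ s : σ, u s i * v s j * w s k) : rankLE T r := by
  classical
  let e := Fintype.equivFin σ
  let ι : σ → Fin r := fun s => Fin.castLE hcard (e s)
  have hι : Function.Injective ι := fun a b h => by
    have := Fin.castLE_injective hcard h
    exact e.injective this
  let u' : Fin r → I → ℂ := fun t => if h : ∃ s, ι s = t then u h.choose else 0
  let v' : Fin r → J → ℂ := fun t => if h : ∃ s, ι s = t then v h.choose else 0
  let w' : Fin r → K → ℂ := fun t => if h : ∃ s, ι s = t then w h.choose else 0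
  refine ⟨u', v', w', ?_⟩
  rw [hT]
  funext i j k
  have hmap : (Finset.univ.map ⟨ι, hι⟩) ⊆ Finset.univ := Finset.subset_univ _
  rw [show (∑ t : Fin r, u' t i * v' t j * w' t k)
      = ∑ t ∈ Finset.univ.map ⟨ι, hι⟩, u' t i * v' t j * w' t k by
    refine (Finset.sum_subset hmap ?_).symm
    intro t _ ht
    have h' : ¬ ∃ s, ι s = t := by
      intro ⟨s, hs⟩; exact ht (Finset.mem_map.2 ⟨s, Finset.mem_univ _, hs⟩)
    simp [u', v', w', h']]
  rw [Finset.sum_map]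
  refine Finset.sum_congr rfl ?_
  intro s _
  have h : ∃ s', ι s' = ι s := ⟨s, rfl⟩
  have hch : h.choose = s := hι h.choose_spec
  simp only [Function.Embedding.coeFn_mk, u', v', w', dif_pos h, hch]

lemma cw_block (q : ℕ) (a c : Fin (q + 1)) (X : Fin (q + 1) → ℂ) :
    ∑ j, cwArr q a j c * X j =
      if c = 0 then (if a = 0 then 0 else X a)
      else if a = 0 then X c else if a = c then X 0 else 0 := by
  classical
  by_cases hc : c = 0
  · by_cases ha : a = 0
    · simp [cwArr, hc, ha]
    · have key : ∀ j, cwArr q a j c * X j = if j = a then X j else 0 := by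
        intro j
        by_cases h : j = a
        · subst h; simp [cwArr, hc, ha]
        · simp [cwArr, hc, ha, h, show ¬(a = j) from fun h' => h h'.symm]
      rw [Finset.sum_congr rfl fun j _ => key j]
      simp [hc, ha]
  · by_cases ha : a = 0
    · have hac : ¬(a = c) := by rw [ha]; exact fun h => hc h.symm
      have key : ∀ j, cwArr q a j c * X j = if j = c then X j else 0 := by
        intro j
        by_cases h : j = c
        · subst h; simp [cwArr, hc, ha]
        · simp [cwArr, hc, ha, h, hac, show ¬((0:Fin (q+1)) = c) from fun h' => hc h'.symm]
      rw [Finset.sum_congr rfl fun j _ => key j]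
      simp [hc, ha]
    · by_cases hac : a = c
      · have key : ∀ j, cwArr q a j c * X j = if j = 0 then X j else 0 := by
          intro j
          by_cases h : j = (0 : Fin (q+1))
          · subst h; simp [cwArr, hc, ha, hac]
          · simp [cwArr, hc, ha, h, hac]
        rw [Finset.sum_congr rfl fun j _ => key j]
        simp [hc, ha, hac]
      · have key : ∀ j, cwArr q a j c * X j = 0 := by
          intro j; simp [cwArr, hc, ha, hac]
        rw [Finset.sum_congr rfl fun j _ => key j]
        simp [hc, ha, hac]


open Matrix in
lemma rank_submatrix_le' {α β γ δ : Type*} [Fintype α] [Fintype β] [Fintype γ] [Fintype δ]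
    [DecidableEq γ] [DecidableEq δ]
    (M : Matrix γ δ ℂ) (f : α → γ) (g : β → δ) :
    (M.submatrix f g).rank ≤ M.rank := by
  have h : M.submatrix f g
      = ((1 : Matrix γ γ ℂ).submatrix f (Equiv.refl γ)) * M * ((1 : Matrix δ δ ℂ).submatrix (Equiv.refl δ) g) := by
    rw [Matrix.mul_submatrix_one, Matrix.one_submatrix_mul]
    simp
  rw [h]
  exact le_trans (Matrix.rank_mul_le_left _ _)
    (le_trans (Matrix.rank_mul_le_right _ _) le_rfl)

open Matrix LinearMap in
/-- rank of `[[0, Z],[Z, W]]` is at least `2 * rank Z`. -/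
lemma rank_block {α β : Type*} [Fintype α] [Fintype β] [DecidableEq α] [DecidableEq β]
    (Z W : Matrix α β ℂ) :
    2 * Z.rank ≤ (Matrix.of fun (p : Fin 2 × α) (s : Fin 2 × β) =>
      if p.1 = 0 then (if s.1 = 0 then 0 else Z p.2 s.2)
      else (if s.1 = 0 then Z p.2 s.2 else W p.2 s.2)).rank := by
  classical
  set M : Matrix (Fin 2 × α) (Fin 2 × β) ℂ := Matrix.of fun p s =>
      if p.1 = 0 then (if s.1 = 0 then 0 else Z p.2 s.2)
      else (if s.1 = 0 then Z p.2 s.2 else W p.2 s.2) with hM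
  set S : Submodule ℂ ((Fin 2 × α) → ℂ) := LinearMap.range M.mulVecLin with hS
  let π : ((Fin 2 × α) → ℂ) →ₗ[ℂ] (α → ℂ) := LinearMap.funLeft ℂ ℂ (fun i => ((0 : Fin 2), i))
  have hmv : ∀ v : (Fin 2 × β) → ℂ, ∀ t : Fin 2, ∀ i : α,
      M.mulVec v (t, i) = (if t = 0 then ∑ k, Z i k * v (1, k)
        else (∑ k, Z i k * v (0, k)) + ∑ k, W i k * v (1, k)) := by
    intro v t i
    rw [Matrix.mulVec]
    show ∑ s : Fin 2 × β, M (t, i) s * v s = _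
    rw [Fintype.sum_prod_type, Fin.sum_univ_two]
    by_cases ht : t = 0 <;> simp [hM, ht]
  have hrange : LinearMap.range Z.mulVecLin ≤ S.map π := by
    rintro y ⟨v, rfl⟩
    refine ⟨M.mulVec (fun s => if s.1 = 0 then 0 else v s.2), ⟨_, rfl⟩, ?_⟩
    funext i
    show M.mulVec _ (0, i) = _
    rw [hmv]
    simp only [if_true, eq_self_iff_true]
    simp [Matrix.mulVecLin_apply, Matrix.mulVec, dotProduct]
  let ι1 : (α → ℂ) →ₗ[ℂ] ((Fin 2 × α) → ℂ) :=
    { toFun := fun y => fun p => if p.1 = 0 then 0 else y p.2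
      map_add' := by intro a b; funext p; by_cases h : p.1 = 0 <;> simp [h]
      map_smul' := by intro c a; funext p; by_cases h : p.1 = 0 <;> simp [h] }
  have hι1S : ∀ y ∈ LinearMap.range Z.mulVecLin, ι1 y ∈ S := by
    rintro y ⟨v, rfl⟩
    refine ⟨(fun s => if s.1 = 0 then v s.2 else 0), ?_⟩
    funext p
    obtain ⟨t, i⟩ := p
    show M.mulVec _ (t, i) = _
    rw [hmv]
    by_cases ht : t = 0 <;>
      simp [ι1, ht, Matrix.mulVecLin_apply, Matrix.mulVec, dotProduct]
  have hι1inj : Function.Injective ι1 := by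
    intro a b h
    funext i
    have := congrFun h ((1 : Fin 2), i)
    simpa [ι1] using this
  let κ : ↥(LinearMap.range Z.mulVecLin) →ₗ[ℂ] ↥(LinearMap.ker (π.domRestrict S)) :=
    { toFun := fun y => ⟨⟨ι1 y, hι1S _ y.2⟩, by
        simp only [LinearMap.mem_ker, LinearMap.domRestrict_apply]
        funext i
        simp [π, ι1, LinearMap.funLeft]⟩
      map_add' := by intro a b; ext : 2; simp
      map_smul' := by intro c a; ext : 2; simp }
  have hκinj : Function.Injective κ := by
    intro a b h
    apply Subtype.ext
    apply hι1inj
    have := congrArg (fun x => ((x : ↥S) : (Fin 2 × α) → ℂ)) (congrArg Subtype.val h)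
    exact this
  have h1 : Z.rank ≤ Module.finrank ℂ ↥(S.map π) :=
    Submodule.finrank_mono hrange
  have h2 : Z.rank ≤ Module.finrank ℂ ↥(LinearMap.ker (π.domRestrict S)) :=
    LinearMap.finrank_le_finrank_of_injective hκinj
  have h3 : Module.finrank ℂ ↥(S.map π) + Module.finrank ℂ ↥(LinearMap.ker (π.domRestrict S))
      = Module.finrank ℂ ↥S := by
    rw [← LinearMap.range_domRestrict]
    exact LinearMap.finrank_range_add_finrank_ker (π.domRestrict S)
  have : 2 * Z.rank ≤ Module.finrank ℂ ↥S := by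
    rw [← h3, two_mul]
    exact add_le_add h1 h2
  exact this


/-- rows are orthonormal (algebraic formulation). -/
def IsOrthoRows {X I : Type*} [DecidableEq X] [Fintype I] (Q : X → I → ℂ) : Prop :=
  ∀ x x', ∑ i, Q x i * star (Q x' i) = if x = x' then 1 else 0

lemma exists_ortho_rows {I σ : Type*} [Fintype I] [DecidableEq I] [Fintype σ] (d : ℕ)
    (u : σ → I → ℂ) (hd : d + Fintype.card σ ≤ Fintype.card I) :
    ∃ Q : Fin d → I → ℂ, IsOrthoRows Q ∧ ∀ s x, ∑ i, Q x i * u s i = 0 := by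
  classical
  set E := EuclideanSpace ℂ I
  let φ : σ → (E →ₗ[ℂ] ℂ) := fun s =>
    { toFun := fun z => ∑ i, z i * u s i
      map_add' := by
        intro a b
        show ∑ i, (a i + b i) * u s i = _
        rw [← Finset.sum_add_distrib]
        exact Finset.sum_congr rfl fun i _ => by ring
      map_smul' := by
        intro c a
        show ∑ i, (c * a i) * u s i = c * ∑ i, a i * u s i
        rw [Finset.mul_sum]
        exact Finset.sum_congr rfl fun i _ => by ring }
  let Φ : E →ₗ[ℂ] (σ → ℂ) := LinearMap.pi φ
  set V : Submodule ℂ E := LinearMap.ker Φ with hV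
  have hdim : d ≤ Module.finrank ℂ ↥V := by
    have h1 := LinearMap.finrank_range_add_finrank_ker Φ
    have h2 : Module.finrank ℂ ↥(LinearMap.range Φ) ≤ Fintype.card σ := by
      have := Submodule.finrank_le (LinearMap.range Φ)
      rwa [Module.finrank_pi ℂ] at this
    have h3 : Module.finrank ℂ E = Fintype.card I := finrank_euclideanSpace
    have h4 : Module.finrank ℂ ↥V = Module.finrank ℂ ↥(LinearMap.ker Φ) := rfl
    omega
  let bV := stdOrthonormalBasis ℂ ↥V
  let Q : Fin d → I → ℂ := fun x i => (((bV (Fin.castLE hdim x)) : E) : I → ℂ) i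
  have hmem : ∀ x : Fin d, ((bV (Fin.castLE hdim x) : E)) ∈ V := fun x =>
    (bV (Fin.castLE hdim x)).2
  refine ⟨Q, ?_, ?_⟩
  · intro x x'
    have horth := orthonormal_iff_ite.mp bV.orthonormal (Fin.castLE hdim x') (Fin.castLE hdim x)
    rw [Submodule.coe_inner, PiLp.inner_apply] at horth
    have : ∑ i, Q x i * star (Q x' i) = if Fin.castLE hdim x' = Fin.castLE hdim x then 1 else 0 := by
      rw [← horth]
      exact Finset.sum_congr rfl fun i _ => by
        simp only [RCLike.inner_apply]
        ring_nf
        rfl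
    rw [this]
    by_cases h : x = x'
    · subst h; simp
    · rw [if_neg h, if_neg (fun hc => h ((Fin.castLE_injective hdim hc).symm))]
  · intro s x
    have h0 : Φ ((bV (Fin.castLE hdim x)) : E) = 0 := hmem x
    exact congrFun h0 s

lemma isCompact_orthoRows {X I : Type*} [Fintype X] [Fintype I] [DecidableEq X] :
    IsCompact {Q : X → I → ℂ | IsOrthoRows Q} := by
  classical
  apply Metric.isCompact_of_isClosed_isBounded
  · have : {Q : X → I → ℂ | IsOrthoRows Q} =
        ⋂ (x : X) (x' : X), {Q | ∑ i, Q x i * star (Q x' i) = if x = x' then 1 else 0} := by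
      ext Q; simp [IsOrthoRows, Set.mem_iInter]
    rw [this]
    refine isClosed_iInter fun x => isClosed_iInter fun x' => isClosed_eq ?_ continuous_const
    refine continuous_finset_sum _ fun i _ => Continuous.mul ?_ ?_
    · exact (continuous_apply i).comp (continuous_apply x)
    · exact continuous_star.comp ((continuous_apply i).comp (continuous_apply x'))
  · rw [Metric.isBounded_iff_subset_closedBall 0]
    refine ⟨1, fun Q hQ => ?_⟩
    have hno : ∀ x i, ‖Q x i‖ ≤ 1 := by
      intro x i
      have h1 := hQ x x
      rw [if_pos rfl] at h1
      have h2 : ∀ i', Q x i' * star (Q x i') = ((‖Q x i'‖^2 : ℝ) : ℂ) := by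
        intro i'
        rw [show (star (Q x i') : ℂ) = (starRingEnd ℂ) (Q x i') from rfl,
          Complex.mul_conj, Complex.normSq_eq_norm_sq]
      rw [Finset.sum_congr rfl fun i' _ => h2 i'] at h1
      rw [← Complex.ofReal_sum] at h1
      have h3 : (∑ i', ‖Q x i'‖^2) = 1 := by exact_mod_cast h1
      have h4 : ‖Q x i‖^2 ≤ 1 := by
        rw [← h3]
        exact Finset.single_le_sum (f := fun i' => ‖Q x i'‖^2) (fun i' _ => sq_nonneg _) (Finset.mem_univ i)
      nlinarith [norm_nonneg (Q x i)]
    rw [Metric.mem_closedBall, dist_zero_right]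
    rw [pi_norm_le_iff_of_nonneg (by norm_num : (0:ℝ) ≤ 1)]
    intro x
    rw [pi_norm_le_iff_of_nonneg (by norm_num : (0:ℝ) ≤ 1)]
    exact hno x

open Matrix in
lemma orthoRows_surjective {X I : Type*} [Fintype X] [Fintype I] [DecidableEq X]
    {Q : X → I → ℂ} (hQ : IsOrthoRows Q) :
    Function.Surjective (Matrix.of Q).mulVecLin := by
  intro y
  refine ⟨fun i => ∑ x, star (Q x i) * y x, ?_⟩
  rw [Matrix.mulVecLin_apply]
  funext x
  rw [Matrix.mulVec]
  show ∑ i, Q x i * (∑ x', star (Q x' i) * y x') = y x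
  have : ∀ i, Q x i * (∑ x', star (Q x' i) * y x') = ∑ x', (Q x i * star (Q x' i)) * y x' := by
    intro i; rw [Finset.mul_sum]; exact Finset.sum_congr rfl fun x' _ => by ring
  rw [Finset.sum_congr rfl fun i _ => this i, Finset.sum_comm]
  have : ∀ x', (∑ i, (Q x i * star (Q x' i)) * y x') = (if x = x' then 1 else 0) * y x' := by
    intro x'
    rw [← Finset.sum_mul, hQ x x']
  rw [Finset.sum_congr rfl fun x' _ => this x']
  simp

open Matrix in
lemma cw_minrank (q : ℕ) (hq : 2 ≤ q) :
    ∀ (n : ℕ) (b : (Fin n → Fin (q + 1)) → ℂ), b ≠ 0 →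
      2 ^ n ≤ (Matrix.of fun i k : Fin n → Fin (q + 1) =>
        ∑ j, b j * cwPow q n i j k).rank := by
  intro n
  induction n with
  | zero =>
    intro b hb
    have hbd : b default ≠ 0 := by
      intro h
      exact hb (funext fun j => by rw [Subsingleton.elim j default]; exact h)
    set M : Matrix (Fin 0 → Fin (q+1)) (Fin 0 → Fin (q+1)) ℂ :=
      Matrix.of fun i k => ∑ j, b j * cwPow q 0 i j k with hM
    have hMd : ∀ i k, M i k = b default := by
      intro i k
      show (∑ j, b j * cwPow q 0 i j k) = b default
      rw [Fintype.sum_unique]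
      simp only [cwPow]
      rw [Finset.univ_eq_empty, Finset.prod_empty, mul_one]
      exact congrArg b (Subsingleton.elim _ _)
    rw [pow_zero]
    by_contra h
    push_neg at h
    interval_cases hr : M.rank
    have : LinearMap.range M.mulVecLin = ⊥ := Submodule.finrank_eq_zero.mp hr
    have h2 : M.mulVec (fun _ => 1) ∈ LinearMap.range M.mulVecLin :=
      ⟨(fun _ => 1), Matrix.mulVecLin_apply ..⟩
    rw [this, Submodule.mem_bot] at h2
    have h3 := congrFun h2 default
    rw [Matrix.mulVec] at h3
    simp only [dotProduct, mul_one] at h3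
    rw [Fintype.sum_unique, hMd] at h3
    exact hbd h3
  | succ n IH =>
    intro b hb
    set M : Matrix (Fin (n+1) → Fin (q+1)) (Fin (n+1) → Fin (q+1)) ℂ :=
      Matrix.of fun i k => ∑ j, b j * cwPow q (n+1) i j k with hM
    set bsub : Fin (q+1) → (Fin n → Fin (q+1)) → ℂ :=
      fun j0 j' => b (Fin.cons j0 j') with hbsub
    set Nsub : Fin (q+1) → Matrix (Fin n → Fin (q+1)) (Fin n → Fin (q+1)) ℂ :=
      fun j0 => Matrix.of fun i' k' => ∑ j', bsub j0 j' * cwPow q n i' j' k' with hNsub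
    have hcw : ∀ (a j0 c : Fin (q+1)) (i' j' k' : Fin n → Fin (q+1)),
        cwPow q (n+1) (Fin.cons a i') (Fin.cons j0 j') (Fin.cons c k')
          = cwArr q a j0 c * cwPow q n i' j' k' := by
      intro a j0 c i' j' k'
      unfold cwPow
      rw [Fin.prod_univ_succ]
      simp
    have hkey : ∀ (a c : Fin (q+1)) (i' k' : Fin n → Fin (q+1)),
        M (Fin.cons a i') (Fin.cons c k') =
          if c = 0 then (if a = 0 then 0 else Nsub a i' k')
          else if a = 0 then Nsub c i' k' else if a = c then Nsub 0 i' k' else 0 := by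
      intro a c i' k'
      show (∑ j, b j * cwPow q (n+1) (Fin.cons a i') j (Fin.cons c k')) = _
      rw [← cw_block q a c (fun j0 => Nsub j0 i' k')]
      rw [← Equiv.sum_comp (Fin.consEquiv (fun _ => Fin (q+1)))
        (fun j => b j * cwPow q (n+1) (Fin.cons a i') j (Fin.cons c k'))]
      rw [Fintype.sum_prod_type]
      refine Finset.sum_congr rfl fun j0 _ => ?_
      show (∑ j', b (Fin.cons j0 j') * cwPow q (n+1) (Fin.cons a i') (Fin.cons j0 j') (Fin.cons c k'))
        = cwArr q a j0 c * Nsub j0 i' k'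
      show _ = cwArr q a j0 c * ∑ j', bsub j0 j' * cwPow q n i' j' k'
      rw [Finset.mul_sum]
      refine Finset.sum_congr rfl fun j' _ => ?_
      rw [hcw]; ring
    have hx : ∃ j, b j ≠ 0 := by
      by_contra h; push_neg at h; exact hb (funext h)
    obtain ⟨j, hj⟩ := hx
    have hj' : bsub (j 0) (Fin.tail j) ≠ 0 := by
      show b (Fin.cons (j 0) (Fin.tail j)) ≠ 0
      rw [Fin.cons_self_tail]; exact hj
    have hsubne : bsub (j 0) ≠ 0 := fun h => hj' (by rw [h]; rfl)
    have hrw : ∀ j0, 2^n ≤ (Nsub j0).rank ∨ bsub j0 = 0 := by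
      intro j0
      by_cases h : bsub j0 = 0
      · exact Or.inr h
      · exact Or.inl (IH (bsub j0) h)
    rw [pow_succ, mul_comm]
    by_cases hj0 : j 0 = 0
    · -- use W := Nsub 0 on rows o1,o2 / cols o2,o1
      have hW : 2 ^ n ≤ (Nsub 0).rank := IH (bsub 0) (by rwa [← hj0])
      have h1q : (1 : ℕ) < q + 1 := by omega
      have h2q : (2 : ℕ) < q + 1 := by omega
      set o1 : Fin (q+1) := ⟨1, h1q⟩ with ho1
      set o2 : Fin (q+1) := ⟨2, h2q⟩ with ho2
      have ho1z : ¬(o1 = 0) := by simp [ho1, Fin.ext_iff]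
      have ho2z : ¬(o2 = 0) := by simp [ho2, Fin.ext_iff]
      have ho12 : ¬(o1 = o2) := by simp [ho1, ho2, Fin.ext_iff]
      have ho21 : ¬(o2 = o1) := by simp [ho1, ho2, Fin.ext_iff]
      let f : Fin 2 × (Fin n → Fin (q+1)) → (Fin (n+1) → Fin (q+1)) :=
        fun p => Fin.cons (if p.1 = 0 then o1 else o2) p.2
      let g : Fin 2 × (Fin n → Fin (q+1)) → (Fin (n+1) → Fin (q+1)) :=
        fun p => Fin.cons (if p.1 = 0 then o2 else o1) p.2
      have hsub : M.submatrix f g = Matrix.of fun (p : Fin 2 × (Fin n → Fin (q+1)))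
          (s : Fin 2 × (Fin n → Fin (q+1))) =>
          if p.1 = 0 then (if s.1 = 0 then 0 else (Nsub 0) p.2 s.2)
          else (if s.1 = 0 then (Nsub 0) p.2 s.2 else (0 : Matrix (Fin n → Fin (q+1)) (Fin n → Fin (q+1)) ℂ) p.2 s.2) := by
        ext p s
        show M (f p) (g s) = _
        show M (Fin.cons (if p.1 = 0 then o1 else o2) p.2) (Fin.cons (if s.1 = 0 then o2 else o1) s.2) = _
        rw [hkey]
        by_cases hp : p.1 = 0 <;> by_cases hs : s.1 = 0 <;>
          simp [hp, hs, ho1z, ho2z, ho12, ho21]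
      have := rank_block (Nsub 0) (0 : Matrix (Fin n → Fin (q+1)) (Fin n → Fin (q+1)) ℂ)
      rw [← hsub] at this
      calc 2 * 2^n ≤ 2 * (Nsub 0).rank := by omega
        _ ≤ (M.submatrix f g).rank := this
        _ ≤ M.rank := rank_submatrix_le' M f g
    · -- use Z := Nsub (j 0), W := Nsub 0 on rows 0,(j 0) / cols 0,(j 0)
      have hZ : 2 ^ n ≤ (Nsub (j 0)).rank := IH (bsub (j 0)) hsubne
      let f : Fin 2 × (Fin n → Fin (q+1)) → (Fin (n+1) → Fin (q+1)) :=
        fun p => Fin.cons (if p.1 = 0 then 0 else j 0) p.2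
      have hsub : M.submatrix f f = Matrix.of fun (p : Fin 2 × (Fin n → Fin (q+1)))
          (s : Fin 2 × (Fin n → Fin (q+1))) =>
          if p.1 = 0 then (if s.1 = 0 then 0 else (Nsub (j 0)) p.2 s.2)
          else (if s.1 = 0 then (Nsub (j 0)) p.2 s.2 else (Nsub 0) p.2 s.2) := by
        ext p s
        show M (Fin.cons (if p.1 = 0 then 0 else j 0) p.2) (Fin.cons (if s.1 = 0 then 0 else j 0) s.2) = _
        rw [hkey]
        by_cases hp : p.1 = 0 <;> by_cases hs : s.1 = 0 <;>
          simp [hp, hs, hj0]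
      have := rank_block (Nsub (j 0)) (Nsub 0)
      rw [← hsub] at this
      calc 2 * 2^n ≤ 2 * (Nsub (j 0)).rank := by omega
        _ ≤ (M.submatrix f f).rank := this
        _ ≤ M.rank := rank_submatrix_le' M f f

set_option maxHeartbeats 1000000 in
open Matrix in
/-- for `q ≥ 2` and `n ≥ 1`,
`bR(φ_cw^{⊗n}) ≥ (q + 1)ⁿ + 2ⁿ − 1`. -/
theorem stmt13 (q n : ℕ) (hq : 2 ≤ q) (hn : 1 ≤ n) :
    (q + 1) ^ n + 2 ^ n - 1 ≤ bRank (cwPow q n) := by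
  classical
  set I := (Fin n → Fin (q + 1)) with hI
  set T : I → I → I → ℂ := cwPow q n with hT
  set m : ℕ := (q + 1) ^ n with hm
  set p : ℕ := 2 ^ n - 1 with hp
  have hcardI : Fintype.card I = m := by
    show Fintype.card (Fin n → Fin (q + 1)) = (q + 1) ^ n
    simp [Fintype.card_fun]
  have hp1 : p + 1 = 2 ^ n := by
    rw [hp]; have : 1 ≤ 2 ^ n := Nat.one_le_two_pow; omega
  have hpm : p < m := by
    have h2 : (2:ℕ) ^ n ≤ (q+1) ^ n := Nat.pow_le_pow_left (by omega) n
    omega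
  have hm1 : 1 ≤ m := by omega
  have hgoal : (q + 1) ^ n + 2 ^ n - 1 = m + p := by
    rw [hm, hp]; have : 1 ≤ 2 ^ n := Nat.one_le_two_pow; omega
  rw [hgoal]
  -- the set is nonempty
  set RSet := {r | T ∈ closure {S : I → I → I → ℂ | rankLE S r}} with hRSet
  have hne : RSet.Nonempty := by
    refine ⟨Fintype.card I * Fintype.card I, subset_closure ?_⟩
    refine rankLE_of_fintype (σ := I × I)
      (fun s i => if i = s.1 then 1 else 0)
      (fun s j => if j = s.2 then 1 else 0)
      (fun s k => T s.1 s.2 k) (by rw [Fintype.card_prod]) ?_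
    funext i j k
    rw [Fintype.sum_prod_type]
    rw [Finset.sum_eq_single i ?_ ?_]
    · rw [Finset.sum_eq_single j ?_ ?_]
      · simp
      · intro b _ hb; simp [hb, Ne.symm hb]
      · intro h; exact absurd (Finset.mem_univ j) h
    · intro b _ hb
      refine Finset.sum_eq_zero fun c _ => ?_
      simp [show ¬(i = b) from fun h => hb h.symm]
    · intro h; exact absurd (Finset.mem_univ i) h
  -- it suffices to bound every element of the set
  have hmain : ∀ r ∈ RSet, m + p ≤ r := by
    intro r hr
    by_contra hlt
    push_neg at hlt
    set p' : ℕ := min p r with hp'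
    have hp'r : p' ≤ r := min_le_right _ _
    have hp'p : p' ≤ p := min_le_left _ _
    -- sequence of rank ≤ r tensors converging to T
    obtain ⟨Sseq, hSmem, hSlim⟩ := mem_closure_iff_seq_limit.mp hr
    choose u v w hdec using hSmem
    -- subsets of size p'
    have hSig : ∀ k : ℕ, ∃ Sg : Finset (Fin r), Sg ⊆ Finset.univ ∧ Sg.card = p' := by
      intro k
      exact Finset.exists_subset_card_eq (s := Finset.univ) (n := p') (by simpa using hp'r)
    choose Sig _ hSigcard using hSig
    -- orthonormal rows annihilating the chosen u's
    have hQex : ∀ k : ℕ, ∃ Q : Fin (m - p) → I → ℂ, IsOrthoRows Q ∧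
        ∀ (s : ↥(Sig k)) x, ∑ i, Q x i * u k (↑s) i = 0 := by
      intro k
      refine exists_ortho_rows (m - p) (fun s : ↥(Sig k) => u k ↑s) ?_
      rw [hcardI, Fintype.card_coe, hSigcard]
      omega
    choose Q hQortho hQann using hQex
    -- extract convergent subsequence of the Q's
    obtain ⟨Qinf, hQinfmem, φ, hφmono, hQconv⟩ :=
      isCompact_orthoRows.tendsto_subseq (x := Q) (fun k => hQortho k)
    have hQinf : IsOrthoRows Qinf := hQinfmem
    -- the limit restricted tensor and its flattening
    set T' : Fin (m - p) → I → I → ℂ :=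
      fun x j k'' => ∑ i, Qinf x i * T i j k'' with hT'
    set Bg : Matrix (Fin (m - p) × I) I ℂ :=
      Matrix.of (fun pp c => T' pp.1 c pp.2) with hBg
    -- injectivity of the flattening
    have hinj : LinearMap.ker Bg.mulVecLin = ⊥ := by
      rw [LinearMap.ker_eq_bot']
      intro b hb
      by_contra hbne
      -- slice matrix
      set Nb : Matrix I I ℂ := Matrix.of (fun i k'' => ∑ j, b j * T i j k'') with hNb
      have hQN : (Matrix.of Qinf) * Nb = 0 := by
        ext x k''
        have hbv := congrFun hb (x, k'')
        rw [Matrix.mulVecLin_apply] at hbv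
        rw [Matrix.mul_apply]
        show (∑ i, Qinf x i * Nb i k'') = 0
        have h1 : ∀ i, Qinf x i * Nb i k'' = ∑ j, b j * (Qinf x i * T i j k'') := by
          intro i
          show Qinf x i * (∑ j, b j * T i j k'') = _
          rw [Finset.mul_sum]
          exact Finset.sum_congr rfl fun j _ => by ring
        rw [Finset.sum_congr rfl fun i _ => h1 i, Finset.sum_comm]
        have h2 : ∀ j, (∑ i, b j * (Qinf x i * T i j k'')) = Bg (x, k'') j * b j := by
          intro j
          show _ = T' x j k'' * b j
          rw [hT']
          show _ = (∑ i, Qinf x i * T i j k'') * b j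
          rw [Finset.sum_mul]
          exact Finset.sum_congr rfl fun i _ => by ring
        rw [Finset.sum_congr rfl fun j _ => h2 j]
        have hbv' : Bg.mulVec b (x, k'') = 0 := hbv
        rw [Matrix.mulVec] at hbv'
        exact hbv'
      -- rank bounds
      have hminr : 2 ^ n ≤ Nb.rank := cw_minrank q hq n b hbne
      have hrange : LinearMap.range Nb.mulVecLin ≤ LinearMap.ker (Matrix.of Qinf).mulVecLin := by
        rintro y ⟨z, rfl⟩
        rw [LinearMap.mem_ker, Matrix.mulVecLin_apply, Matrix.mulVecLin_apply,
          Matrix.mulVec_mulVec, hQN]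
        simp
      have hsur : Function.Surjective (Matrix.of Qinf).mulVecLin := orthoRows_surjective hQinf
      have hrk : Module.finrank ℂ ↥(LinearMap.range (Matrix.of Qinf).mulVecLin) = m - p := by
        rw [LinearMap.range_eq_top.mpr hsur, finrank_top, Module.finrank_pi]
        simp
      have hrn := LinearMap.finrank_range_add_finrank_ker (Matrix.of Qinf).mulVecLin
      rw [hrk] at hrn
      have hpi : Module.finrank ℂ (I → ℂ) = m := by rw [Module.finrank_pi]; exact hcardI
      rw [hpi] at hrn
      have hker : Module.finrank ℂ ↥(LinearMap.ker (Matrix.of Qinf).mulVecLin) = p := by omega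
      have hle : Nb.rank ≤ p := by
        rw [← hker]
        exact Submodule.finrank_mono hrange
      omega
    -- left inverse of the flattening
    obtain ⟨L, hL⟩ := Bg.mulVecLin.exists_leftInverse_of_injective hinj
    -- matrices along the subsequence
    set T'k : ℕ → Fin (m - p) → I → I → ℂ :=
      fun k x j k'' => ∑ i, Q (φ k) x i * Sseq (φ k) i j k'' with hT'k
    set Mat : ℕ → Matrix I I ℂ :=
      fun k => Matrix.of (fun a c => L (fun pp : Fin (m - p) × I => T'k k pp.1 c pp.2) a)
      with hMat
    -- convergence to the identity matrix
    have hMatlim : Filter.Tendsto Mat Filter.atTop (nhds 1) := by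
      apply tendsto_pi_nhds.mpr
      intro a
      rw [tendsto_pi_nhds]
      intro c
      have hfun : Filter.Tendsto (fun k => (fun pp : Fin (m - p) × I => T'k k pp.1 c pp.2))
          Filter.atTop (nhds (fun pp : Fin (m - p) × I => T' pp.1 c pp.2)) := by
        rw [tendsto_pi_nhds]
        intro pp
        have hQc : ∀ x i, Filter.Tendsto (fun k => Q (φ k) x i) Filter.atTop (nhds (Qinf x i)) := by
          intro x i
          have h1 := tendsto_pi_nhds.mp hQconv x
          exact tendsto_pi_nhds.mp h1 i
        have hSc : ∀ i j k'', Filter.Tendsto (fun k => Sseq (φ k) i j k'') Filter.atTop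
            (nhds (T i j k'')) := by
          intro i j k''
          have h0 : Filter.Tendsto (fun k => Sseq (φ k)) Filter.atTop (nhds T) :=
            hSlim.comp hφmono.tendsto_atTop
          have h1 := tendsto_pi_nhds.mp h0 i
          have h2 := tendsto_pi_nhds.mp h1 j
          exact tendsto_pi_nhds.mp h2 k''
        exact tendsto_finset_sum _ fun i _ => (hQc pp.1 i).mul (hSc i c pp.2)
      have hLc : Continuous fun f : (Fin (m - p) × I → ℂ) => L f a :=
        (continuous_apply a).comp L.continuous_of_finiteDimensional
      have := (hLc.tendsto _).comp hfun
      have hlimval : L (fun pp : Fin (m - p) × I => T' pp.1 c pp.2) a = (1 : Matrix I I ℂ) a c := by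
        have hz : (fun pp : Fin (m - p) × I => T' pp.1 c pp.2)
            = Bg.mulVecLin (Pi.single c 1) := by
          rw [Matrix.mulVecLin_apply, Matrix.mulVec_single_one]
          rfl
        rw [hz, ← LinearMap.comp_apply, hL]
        simp [Matrix.one_apply, Pi.single_apply]
      rw [← hlimval]
      exact this
    -- determinant eventually nonzero
    have hdetlim : Filter.Tendsto (fun k => (Mat k).det) Filter.atTop (nhds 1) := by
      have hcd : Continuous fun A : Matrix I I ℂ => A.det := Continuous.matrix_det continuous_id
      have := (hcd.tendsto 1).comp hMatlim
      simpa [Function.comp_def] using this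
    obtain ⟨k, hdk⟩ := (hdetlim.eventually_ne one_ne_zero).exists
    -- factorization of Mat k through few terms
    set σk := {s : Fin r // s ∉ Sig (φ k)} with hσk
    have hcardσ : Fintype.card σk = r - p' := by
      show Fintype.card {s : Fin r // s ∉ Sig (φ k)} = r - p'
      rw [Fintype.card_subtype_compl, Fintype.card_coe, hSigcard, Fintype.card_fin]
    set P : Matrix I σk ℂ := Matrix.of (fun a s =>
      L (fun pp : Fin (m - p) × I =>
        (∑ i, Q (φ k) pp.1 i * u (φ k) (↑s) i) * w (φ k) (↑s) pp.2) a) with hP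
    set Wm : Matrix σk I ℂ := Matrix.of (fun s c => v (φ k) (↑s) c) with hWm
    have hfact : Mat k = P * Wm := by
      ext a c
      rw [Matrix.mul_apply]
      show L (fun pp : Fin (m - p) × I => T'k k pp.1 c pp.2) a = _
      have hdecomp : (fun pp : Fin (m - p) × I => T'k k pp.1 c pp.2)
          = ∑ s : σk, v (φ k) (↑s) c •
            (fun pp : Fin (m - p) × I =>
              (∑ i, Q (φ k) pp.1 i * u (φ k) (↑s) i) * w (φ k) (↑s) pp.2) := by
        funext pp
        show T'k k pp.1 c pp.2 = _
        rw [hT'k]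
        show (∑ i, Q (φ k) pp.1 i * Sseq (φ k) i c pp.2) = _
        rw [Finset.sum_congr rfl (fun i _ => by rw [hdec (φ k)])]
        show (∑ i, Q (φ k) pp.1 i * ∑ s : Fin r, u (φ k) s i * v (φ k) s c * w (φ k) s pp.2) = _
        have h1 : ∀ i, Q (φ k) pp.1 i * ∑ s : Fin r, u (φ k) s i * v (φ k) s c * w (φ k) s pp.2
            = ∑ s : Fin r, Q (φ k) pp.1 i * (u (φ k) s i * v (φ k) s c * w (φ k) s pp.2) := by
          intro i; rw [Finset.mul_sum]
        rw [Finset.sum_congr rfl fun i _ => h1 i, Finset.sum_comm]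
        have h2 : ∀ s : Fin r, (∑ i, Q (φ k) pp.1 i * (u (φ k) s i * v (φ k) s c * w (φ k) s pp.2))
            = (∑ i, Q (φ k) pp.1 i * u (φ k) s i) * v (φ k) s c * w (φ k) s pp.2 := by
          intro s
          rw [Finset.sum_mul, Finset.sum_mul]
          exact Finset.sum_congr rfl fun i _ => by ring
        rw [Finset.sum_congr rfl fun s _ => h2 s]
        -- kill the terms in Sig
        rw [← Finset.sum_compl_add_sum (Sig (φ k))
          (fun s => (∑ i, Q (φ k) pp.1 i * u (φ k) s i) * v (φ k) s c * w (φ k) s pp.2)]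
        have hzero : (∑ s ∈ Sig (φ k),
            (∑ i, Q (φ k) pp.1 i * u (φ k) s i) * v (φ k) s c * w (φ k) s pp.2) = 0 := by
          refine Finset.sum_eq_zero fun s hs => ?_
          rw [hQann (φ k) ⟨s, hs⟩ pp.1]
          ring
        rw [hzero, add_zero, Finset.sum_apply]
        rw [Finset.sum_subtype (p := fun s : Fin r => s ∉ Sig (φ k)) ((Sig (φ k))ᶜ : Finset (Fin r))
          (fun s => Finset.mem_compl)]
        refine Finset.sum_congr rfl fun s _ => ?_
        rw [Pi.smul_apply, smul_eq_mul]
        ring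
      rw [hdecomp, map_sum]
      rw [Finset.sum_apply]
      refine Finset.sum_congr rfl fun s _ => ?_
      rw [LinearMap.map_smul]
      show (v (φ k) (↑s) c • L _) a = _
      rw [Pi.smul_apply, smul_eq_mul]
      show v (φ k) (↑s) c * P a s = P a s * Wm s c
      rw [hWm]; exact mul_comm _ _
    -- rank contradiction
    have hrk1 : (Mat k).rank = Fintype.card I :=
      Matrix.rank_of_isUnit (Mat k) (Matrix.isUnit_iff_isUnit_det (Mat k) |>.mpr
        (isUnit_iff_ne_zero.mpr hdk))
    have hrk2 : (Mat k).rank ≤ r - p' := by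
      rw [hfact]
      calc (P * Wm).rank ≤ Wm.rank := Matrix.rank_mul_le_right P Wm
        _ ≤ Fintype.card σk := Matrix.rank_le_card_height Wm
        _ = r - p' := hcardσ
    rw [hcardI] at hrk1
    rcases Nat.le_total p r with hc | hc
    · have : p' = p := min_eq_left hc
      omega
    · have : p' = r := min_eq_right hc
      omega
  exact hmain _ (Nat.sInf_mem hne)
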